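/- Let (μ_n) be a sequence of Borel probability measures on ℝ, let (a_n) be a sequence of positive reals with a_n → ∞, let σ² > 0, and set I(x) = x²/(2σ²). Assume that for every x ≥ 0, lim_{n→∞} (1/a_n) log μ_n([x,∞)) = −I(x), and for every x ≤ 0, lim_{n→∞} (1/a_n) log μ_n((−∞,x]) = −I(x). Then (μ_n) satisfies the LDP with speed (a_n) and rate function I: for every closed set C ⊆ ℝ, limsup_{n→∞} (1/a_n) log μ_n(C) ≤ −inf_{x∈C} I(x), and for every open set O ⊆ ℝ, liminf_{n→∞} (1/a_n) log μ_n(O) ≥ −inf_{x∈O} I(x). -/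

import Mathlib

open MeasureTheory Filter Set

open scoped ENNReal

private lemma ereal_mul_le_mul_iff {c : ℝ} (hc : 0 < c) {L M : EReal} :
    (c : EReal) * L ≤ (c : EReal) * M ↔ L ≤ M := by
  constructor
  · intro h
    have h2 := mul_le_mul_of_nonneg_left h (by exact_mod_cast (inv_pos.2 hc).le : (0:EReal) ≤ ((c⁻¹ : ℝ) : EReal))
    rwa [← mul_assoc, ← mul_assoc, ← EReal.coe_mul, inv_mul_cancel₀ hc.ne', EReal.coe_one,
      one_mul, one_mul] at h2
  · intro h
    exact mul_le_mul_of_nonneg_left h (by exact_mod_cast hc.le)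

private lemma ereal_mul_lt_mul_iff {c : ℝ} (hc : 0 < c) {L M : EReal} :
    (c : EReal) * L < (c : EReal) * M ↔ L < M := by
  rw [← not_le, ← not_le, ereal_mul_le_mul_iff hc]

private lemma ereal_mul_inv_cancel {c : ℝ} (hc : 0 < c) (L : EReal) :
    (c : EReal) * (((c⁻¹ : ℝ) : EReal) * L) = L := by
  rw [← mul_assoc, ← EReal.coe_mul, mul_inv_cancel₀ hc.ne', EReal.coe_one, one_mul]

private lemma ereal_mul_add_real {c : ℝ} (hc : 0 < c) {L : EReal} (hL : L ≠ ⊤) (r : ℝ) :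
    (c : EReal) * (L + (r : EReal)) = (c : EReal) * L + ((c * r : ℝ) : EReal) := by
  induction L with
  | bot => rw [EReal.bot_add, EReal.coe_mul_bot_of_pos hc, EReal.bot_add]
  | coe l => rw [← EReal.coe_add, ← EReal.coe_mul, ← EReal.coe_mul, ← EReal.coe_add]; ring_nf
  | top => exact absurd rfl hL

private lemma ereal_tendsto_add {f g : ℕ → EReal} {A B : ℝ}
    (hf : Tendsto f atTop (nhds (A : EReal))) (hg : Tendsto g atTop (nhds (B : EReal))) :
    Tendsto (fun n => f n + g n) atTop (nhds ((A + B : ℝ) : EReal)) := by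
  have h := (EReal.continuousAt_add (p := ((A : EReal), (B : EReal)))
    (by simp) (by simp)).tendsto.comp (hf.prodMk_nhds hg)
  simpa [EReal.coe_add, Function.comp_def] using h

private lemma tendsto_inv_mul_zero {a : ℕ → ℝ} (ha' : Tendsto a atTop atTop) (r : ℝ) :
    Tendsto (fun n => (((a n)⁻¹ * r : ℝ) : EReal)) atTop (nhds ((0 : ℝ) : EReal)) := by
  rw [EReal.tendsto_coe]
  simpa using (ha'.inv_tendsto_atTop).mul_const r

private lemma ennlog_two : ENNReal.log 2 = ((Real.log 2 : ℝ) : EReal) := by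
  rw [ENNReal.log_pos_real' (by norm_num)]
  norm_num

private lemma ennlog_half : ENNReal.log 2⁻¹ = ((-Real.log 2 : ℝ) : EReal) := by
  rw [ENNReal.log_inv, ennlog_two, ← EReal.coe_neg]

private lemma ennlog_add_le (x y : ℝ≥0∞) :
    ENNReal.log (x + y) ≤ ENNReal.log 2 + max (ENNReal.log x) (ENNReal.log y) := by
  have h1 : x + y ≤ 2 * max x y := by
    calc x + y ≤ max x y + max x y := add_le_add (le_max_left _ _) (le_max_right _ _)
    _ = 2 * max x y := (two_mul _).symm
  calc ENNReal.log (x + y) ≤ ENNReal.log (2 * max x y) := ENNReal.log_monotone h1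
  _ = ENNReal.log 2 + ENNReal.log (max x y) := ENNReal.log_mul_add
  _ = ENNReal.log 2 + max (ENNReal.log x) (ENNReal.log y) := by
      rw [ENNReal.log_monotone.map_max]

private lemma ennlog_ne_top {x : ℝ≥0∞} (hx : x ≤ 1) : ENNReal.log x ≠ ⊤ :=
  ((ENNReal.log_le_zero_iff.2 hx).trans_lt (by simp)).ne

private lemma aux_lower {a : ℕ → ℝ} (ha : ∀ n, 0 < a n) (ha' : Tendsto a atTop atTop)
    {b c o : ℕ → ℝ≥0∞} (hb1 : ∀ n, b n ≤ 1) (ho : ∀ n, b n - c n ≤ o n) {s t : ℝ}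
    (hst : s < t)
    (hb : Tendsto (fun n => (((a n)⁻¹ : ℝ) : EReal) * ENNReal.log (b n)) atTop
      (nhds ((-s : ℝ) : EReal)))
    (hc : Tendsto (fun n => (((a n)⁻¹ : ℝ) : EReal) * ENNReal.log (c n)) atTop
      (nhds ((-t : ℝ) : EReal))) :
    ((-s : ℝ) : EReal) ≤
      liminf (fun n => (((a n)⁻¹ : ℝ) : EReal) * ENNReal.log (o n)) atTop := by
  set r1 : ℝ := s + (t - s) / 3 with hr1def
  set r2 : ℝ := s + 2 * (t - s) / 3 with hr2def
  have hsr1 : s < r1 := by rw [hr1def]; linarith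
  have hr12 : r1 < r2 := by rw [hr1def, hr2def]; linarith
  have E1 : ∀ᶠ n in atTop, ((-r1 : ℝ) : EReal) < (((a n)⁻¹ : ℝ) : EReal) * ENNReal.log (b n) :=
    hb.eventually (eventually_gt_nhds (by exact_mod_cast neg_lt_neg hsr1))
  have E2 : ∀ᶠ n in atTop, (((a n)⁻¹ : ℝ) : EReal) * ENNReal.log (c n) < ((-r2 : ℝ) : EReal) :=
    hc.eventually (eventually_lt_nhds (by exact_mod_cast neg_lt_neg (by rw [hr2def]; linarith : r2 < t)))
  have E3 : ∀ᶠ n in atTop, Real.log 2 ≤ a n * (r2 - r1) :=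
    (ha'.atTop_mul_const (by linarith : (0:ℝ) < r2 - r1)).eventually_ge_atTop _
  have key : ∀ᶠ n in atTop,
      (((a n)⁻¹ : ℝ) : EReal) * ENNReal.log (b n) + (((a n)⁻¹ * (-Real.log 2) : ℝ) : EReal)
        ≤ (((a n)⁻¹ : ℝ) : EReal) * ENNReal.log (o n) := by
    filter_upwards [E1, E2, E3] with n h1 h2 h3
    -- from h1 : coe (a n * -r1) < log (b n)
    have h1' : ((a n * -r1 : ℝ) : EReal) < ENNReal.log (b n) := by
      have := (ereal_mul_lt_mul_iff (ha n)).2 h1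
      rwa [ereal_mul_inv_cancel (ha n), ← EReal.coe_mul] at this
    have h2' : ENNReal.log (c n) < ((a n * -r2 : ℝ) : EReal) := by
      have := (ereal_mul_lt_mul_iff (ha n)).2 h2
      rwa [ereal_mul_inv_cancel (ha n), ← EReal.coe_mul] at this
    have hreal : a n * -r2 ≤ a n * -r1 - Real.log 2 := by
      have := mul_sub (a n) r2 r1
      nlinarith
    have hcb : c n ≤ b n * 2⁻¹ := by
      rw [← ENNReal.log_le_log_iff, ENNReal.log_mul_add, ennlog_half]
      calc ENNReal.log (c n) ≤ ((a n * -r2 : ℝ) : EReal) := h2'.le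
        _ ≤ ((a n * -r1 - Real.log 2 : ℝ) : EReal) := by exact_mod_cast hreal
        _ = ((a n * -r1 : ℝ) : EReal) + ((-Real.log 2 : ℝ) : EReal) := by
            rw [← EReal.coe_add]; ring_nf
        _ ≤ ENNReal.log (b n) + ((-Real.log 2 : ℝ) : EReal) := add_le_add_left h1'.le _
    have hbo : b n * 2⁻¹ ≤ o n := by
      refine le_trans ?_ (ho n)
      have hbne : b n ≠ ⊤ := (lt_of_le_of_lt (hb1 n) (by simp)).ne
      have := ENNReal.sub_half hbne
      rw [div_eq_mul_inv] at this
      calc b n * 2⁻¹ = b n - b n * 2⁻¹ := this.symm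
        _ ≤ b n - c n := tsub_le_tsub_left hcb _
    have hlog : ENNReal.log (b n) + ((-Real.log 2 : ℝ) : EReal) ≤ ENNReal.log (o n) := by
      rw [← ennlog_half, ← ENNReal.log_mul_add]
      exact ENNReal.log_monotone hbo
    calc (((a n)⁻¹ : ℝ) : EReal) * ENNReal.log (b n) + (((a n)⁻¹ * (-Real.log 2) : ℝ) : EReal)
        = (((a n)⁻¹ : ℝ) : EReal) * (ENNReal.log (b n) + ((-Real.log 2 : ℝ) : EReal)) :=
          (ereal_mul_add_real (inv_pos.2 (ha n)) (ennlog_ne_top (hb1 n)) _).symm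
      _ ≤ (((a n)⁻¹ : ℝ) : EReal) * ENNReal.log (o n) :=
          mul_le_mul_of_nonneg_left hlog (by exact_mod_cast (inv_pos.2 (ha n)).le)
  have hsum : Tendsto (fun n => (((a n)⁻¹ : ℝ) : EReal) * ENNReal.log (b n)
      + (((a n)⁻¹ * (-Real.log 2) : ℝ) : EReal)) atTop (nhds ((-s + 0 : ℝ) : EReal)) :=
    ereal_tendsto_add hb (tendsto_inv_mul_zero ha' _)
  calc ((-s : ℝ) : EReal) = ((-s + 0 : ℝ) : EReal) := by norm_num
    _ = liminf (fun n => (((a n)⁻¹ : ℝ) : EReal) * ENNReal.log (b n)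
        + (((a n)⁻¹ * (-Real.log 2) : ℝ) : EReal)) atTop := hsum.liminf_eq.symm
    _ ≤ liminf (fun n => (((a n)⁻¹ : ℝ) : EReal) * ENNReal.log (o n)) atTop :=
        liminf_le_liminf key

private lemma aux_upper_one {a : ℕ → ℝ} (ha : ∀ n, 0 < a n)
    {m b : ℕ → ℝ≥0∞} (hm : ∀ n, m n ≤ b n) {A : ℝ}
    (hb : Tendsto (fun n => (((a n)⁻¹ : ℝ) : EReal) * ENNReal.log (b n)) atTop
      (nhds ((A : ℝ) : EReal))) :
    limsup (fun n => (((a n)⁻¹ : ℝ) : EReal) * ENNReal.log (m n)) atTop ≤ ((A : ℝ) : EReal) := by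
  rw [← hb.limsup_eq]
  refine limsup_le_limsup (Eventually.of_forall fun n => ?_)
  exact mul_le_mul_of_nonneg_left (ENNReal.log_monotone (hm n))
    (by exact_mod_cast (inv_pos.2 (ha n)).le)

private lemma aux_upper {a : ℕ → ℝ} (ha : ∀ n, 0 < a n) (ha' : Tendsto a atTop atTop)
    {m b c : ℕ → ℝ≥0∞} (hm : ∀ n, m n ≤ b n + c n)
    (hb1 : ∀ n, b n ≤ 1) (hc1 : ∀ n, c n ≤ 1) {A B : ℝ}
    (hb : Tendsto (fun n => (((a n)⁻¹ : ℝ) : EReal) * ENNReal.log (b n)) atTop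
      (nhds ((A : ℝ) : EReal)))
    (hc : Tendsto (fun n => (((a n)⁻¹ : ℝ) : EReal) * ENNReal.log (c n)) atTop
      (nhds ((B : ℝ) : EReal))) :
    limsup (fun n => (((a n)⁻¹ : ℝ) : EReal) * ENNReal.log (m n)) atTop
      ≤ ((max A B : ℝ) : EReal) := by
  have pointwise : ∀ n, (((a n)⁻¹ : ℝ) : EReal) * ENNReal.log (m n)
      ≤ max ((((a n)⁻¹ : ℝ) : EReal) * ENNReal.log (b n))
          ((((a n)⁻¹ : ℝ) : EReal) * ENNReal.log (c n))
        + (((a n)⁻¹ * Real.log 2 : ℝ) : EReal) := by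
    intro n
    have hmono : Monotone fun L : EReal => (((a n)⁻¹ : ℝ) : EReal) * L :=
      fun _ _ h => mul_le_mul_of_nonneg_left h (by exact_mod_cast (inv_pos.2 (ha n)).le)
    have hMne : max (ENNReal.log (b n)) (ENNReal.log (c n)) ≠ ⊤ :=
      (max_lt ((ENNReal.log_le_zero_iff.2 (hb1 n)).trans_lt (by simp))
        ((ENNReal.log_le_zero_iff.2 (hc1 n)).trans_lt (by simp))).ne
    calc (((a n)⁻¹ : ℝ) : EReal) * ENNReal.log (m n)
        ≤ (((a n)⁻¹ : ℝ) : EReal) * (ENNReal.log 2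
            + max (ENNReal.log (b n)) (ENNReal.log (c n))) :=
          hmono ((ENNReal.log_monotone (hm n)).trans (ennlog_add_le _ _))
      _ = (((a n)⁻¹ : ℝ) : EReal) * (max (ENNReal.log (b n)) (ENNReal.log (c n))
            + ((Real.log 2 : ℝ) : EReal)) := by rw [add_comm, ennlog_two]
      _ = (((a n)⁻¹ : ℝ) : EReal) * max (ENNReal.log (b n)) (ENNReal.log (c n))
            + (((a n)⁻¹ * Real.log 2 : ℝ) : EReal) :=
          ereal_mul_add_real (inv_pos.2 (ha n)) hMne _
      _ = max ((((a n)⁻¹ : ℝ) : EReal) * ENNReal.log (b n))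
            ((((a n)⁻¹ : ℝ) : EReal) * ENNReal.log (c n))
            + (((a n)⁻¹ * Real.log 2 : ℝ) : EReal) := by rw [hmono.map_max]
  have hgt : Tendsto (fun n => max ((((a n)⁻¹ : ℝ) : EReal) * ENNReal.log (b n))
      ((((a n)⁻¹ : ℝ) : EReal) * ENNReal.log (c n)) + (((a n)⁻¹ * Real.log 2 : ℝ) : EReal))
      atTop (nhds ((max A B + 0 : ℝ) : EReal)) := by
    refine ereal_tendsto_add ?_ (tendsto_inv_mul_zero ha' _)
    have := hb.max hc
    have hcoe : (((A : ℝ) : EReal) ⊔ ((B : ℝ) : EReal)) = ((max A B : ℝ) : EReal) :=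
      (EReal.coe_strictMono.monotone.map_max).symm
    rwa [hcoe] at this
  calc limsup (fun n => (((a n)⁻¹ : ℝ) : EReal) * ENNReal.log (m n)) atTop
      ≤ limsup _ atTop := limsup_le_limsup (Eventually.of_forall pointwise)
    _ = ((max A B + 0 : ℝ) : EReal) := hgt.limsup_eq
    _ = ((max A B : ℝ) : EReal) := by norm_num

private lemma tail_small {a : ℕ → ℝ} (ha : ∀ n, 0 < a n) (ha' : Tendsto a atTop atTop)
    {m : ℕ → ℝ≥0∞} {s : ℝ} (hs : 0 < s)
    (h : Tendsto (fun n => (((a n)⁻¹ : ℝ) : EReal) * ENNReal.log (m n)) atTop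
      (nhds ((-s : ℝ) : EReal))) :
    ∀ᶠ n in atTop, m n ≤ 1 / 4 := by
  have E1 : ∀ᶠ n in atTop,
      (((a n)⁻¹ : ℝ) : EReal) * ENNReal.log (m n) < ((-s/2 : ℝ) : EReal) :=
    h.eventually (eventually_lt_nhds (by exact_mod_cast (by linarith : -s < -s/2)))
  have E2 : ∀ᶠ n in atTop, a n * (-s/2) ≤ Real.log (1/4) := by
    have : Tendsto (fun n => a n * (-s/2)) atTop atBot :=
      ha'.atTop_mul_const_of_neg (by linarith : -s/2 < 0)
    exact this.eventually_le_atBot _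
  filter_upwards [E1, E2] with n h1 h2
  have h1' : ENNReal.log (m n) < ((a n * (-s/2) : ℝ) : EReal) := by
    have := (ereal_mul_lt_mul_iff (ha n)).2 h1
    rwa [ereal_mul_inv_cancel (ha n), ← EReal.coe_mul] at this
  have hlog14 : ENNReal.log (1/4 : ℝ≥0∞) = ((Real.log (1/4) : ℝ) : EReal) := by
    rw [ENNReal.log_pos_real' (by norm_num)]
    norm_num
  rw [← ENNReal.log_le_log_iff, hlog14]
  exact h1'.le.trans (by exact_mod_cast h2)

private lemma ennreal_quarter : (1/4:ℝ≥0∞) + 1/4 = 2⁻¹ := by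
  rw [one_div]
  have h4 : (4:ℝ≥0∞) = 2 * 2 := by norm_num
  rw [← two_mul, h4, ENNReal.mul_inv (by norm_num) (by norm_num), ← mul_assoc,
    ENNReal.mul_inv_cancel (by norm_num) (by norm_num), one_mul]


/-- A sequence of Borel probability measures on `ℝ` satisfies the LDP with speed `a`
and rate function `I`. Logarithms of measures are taken via `ENNReal.log` (valued in
`EReal`, so that `log 0 = ⊥`), and infima of the rate function are taken in `EReal`. -/
def SatisfiesLDP (μ : ℕ → Measure ℝ) (a : ℕ → ℝ) (I : ℝ → ℝ) : Prop :=
  (∀ C : Set ℝ, IsClosed C →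
    limsup (fun n => (((a n)⁻¹ : ℝ) : EReal) * ENNReal.log (μ n C)) atTop
      ≤ -(⨅ x ∈ C, (I x : EReal))) ∧
  (∀ O : Set ℝ, IsOpen O →
    -(⨅ x ∈ O, (I x : EReal))
      ≤ liminf (fun n => (((a n)⁻¹ : ℝ) : EReal) * ENNReal.log (μ n O)) atTop)

/-- If `(1/a_n) log μ_n [x, ∞) → −x²/(2σ²)` for every `x ≥ 0` and
`(1/a_n) log μ_n (−∞, x] → −x²/(2σ²)` for every `x ≤ 0`, with `a_n → ∞` positive and
`σ² > 0`, then `(μ_n)` satisfies the LDP with speed `(a_n)` and rate function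
`I x = x²/(2σ²)`. -/
theorem stmt6 (μ : ℕ → Measure ℝ) [∀ n, IsProbabilityMeasure (μ n)]
    (a : ℕ → ℝ) (ha : ∀ n, 0 < a n) (ha' : Tendsto a atTop atTop)
    (σ2 : ℝ) (hσ2 : 0 < σ2) (I : ℝ → ℝ) (hI : I = fun x => x ^ 2 / (2 * σ2))
    (hupper : ∀ x : ℝ, 0 ≤ x →
      Tendsto (fun n => (((a n)⁻¹ : ℝ) : EReal) * ENNReal.log (μ n (Set.Ici x)))
        atTop (nhds ((-(I x) : ℝ) : EReal)))
    (hlower : ∀ x : ℝ, x ≤ 0 →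
      Tendsto (fun n => (((a n)⁻¹ : ℝ) : EReal) * ENNReal.log (μ n (Set.Iic x)))
        atTop (nhds ((-(I x) : ℝ) : EReal))) :
    SatisfiesLDP μ a I := by
  have hprob : ∀ n (s : Set ℝ), μ n s ≤ 1 := fun n s => prob_le_one
  constructor
  · -- upper bound for closed sets
    intro C hC
    by_cases hne : C.Nonempty
    swap
    · -- C empty
      rw [not_nonempty_iff_eq_empty] at hne
      subst hne
      have heq : (fun n => (((a n)⁻¹ : ℝ) : EReal) * ENNReal.log (μ n (∅ : Set ℝ)))
          = fun _ => (⊥ : EReal) := funext fun n => by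
        rw [measure_empty, ENNReal.log_zero, EReal.coe_mul_bot_of_pos (inv_pos.2 (ha n))]
      rw [heq, limsup_const]
      exact bot_le
    by_cases h0 : (0:ℝ) ∈ C
    · -- 0 ∈ C : limsup ≤ 0 ≤ -inf
      have hle0 : limsup (fun n => (((a n)⁻¹ : ℝ) : EReal) * ENNReal.log (μ n C)) atTop
          ≤ (0 : EReal) := by
        calc limsup (fun n => (((a n)⁻¹ : ℝ) : EReal) * ENNReal.log (μ n C)) atTop
            ≤ limsup (fun _ : ℕ => (0 : EReal)) atTop :=
              limsup_le_limsup (Eventually.of_forall fun n => by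
                have h := mul_le_mul_of_nonneg_left
                  (ENNReal.log_le_zero_iff.2 (hprob n C))
                  (by exact_mod_cast (inv_pos.2 (ha n)).le :
                    (0:EReal) ≤ (((a n)⁻¹ : ℝ) : EReal))
                simpa using h)
          _ = 0 := limsup_const _
      refine hle0.trans (EReal.le_neg_of_le_neg ?_)
      have h := iInf₂_le (f := fun (x : ℝ) (_ : x ∈ C) => ((I x : ℝ) : EReal)) 0 h0
      have hI0 : I 0 = 0 := by rw [hI]; norm_num
      rw [hI0] at h
      simpa using h
    · -- 0 ∉ C
      have hbddb : BddBelow (C ∩ Ici 0) := ⟨0, fun y hy => hy.2⟩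
      have hbdda : BddAbove (C ∩ Iic 0) := ⟨0, fun y hy => hy.2⟩
      -- bound for a point of C
      have hbound : ∀ z ∈ C, ((-(I z) : ℝ) : EReal) ≤ -(⨅ x ∈ C, ((I x : ℝ) : EReal)) := by
        intro z hz
        rw [EReal.coe_neg]
        exact EReal.neg_le_neg_iff.2 (iInf₂_le z hz)
      by_cases hp : (C ∩ Ici 0).Nonempty <;> by_cases hq : (C ∩ Iic 0).Nonempty
      · -- both sides
        set p := sInf (C ∩ Ici 0) with hpdef
        set q := sSup (C ∩ Iic 0) with hqdef
        have hpC : p ∈ C ∩ Ici 0 := (hC.inter isClosed_Ici).csInf_mem hp hbddb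
        have hqC : q ∈ C ∩ Iic 0 := (hC.inter isClosed_Iic).csSup_mem hq hbdda
        have hsub : C ⊆ Iic q ∪ Ici p := by
          intro x hx
          rcases le_total x 0 with h | h
          · exact Or.inl (le_csSup hbdda ⟨hx, h⟩)
          · exact Or.inr (csInf_le hbddb ⟨hx, h⟩)
        have hm : ∀ n, μ n C ≤ μ n (Iic q) + μ n (Ici p) := fun n =>
          (measure_mono hsub).trans (measure_union_le _ _)
        have hls := aux_upper ha ha' hm (fun n => hprob n _) (fun n => hprob n _)
          (hlower q hqC.2) (hupper p hpC.2)
        refine hls.trans ?_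
        have hcoe : ((max (-(I q)) (-(I p)) : ℝ) : EReal)
            = max ((-(I q) : ℝ) : EReal) ((-(I p) : ℝ) : EReal) :=
          EReal.coe_strictMono.monotone.map_max
        rw [hcoe]
        exact max_le (hbound q hqC.1) (hbound p hpC.1)
      · -- only right side
        set p := sInf (C ∩ Ici 0) with hpdef
        have hpC : p ∈ C ∩ Ici 0 := (hC.inter isClosed_Ici).csInf_mem hp hbddb
        have hsub : C ⊆ Ici p := by
          intro x hx
          rcases le_total x 0 with h | h
          · exact absurd ⟨x, hx, h⟩ hq
          · exact csInf_le hbddb ⟨hx, h⟩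
        exact (aux_upper_one ha (fun n => measure_mono hsub) (hupper p hpC.2)).trans
          (hbound p hpC.1)
      · -- only left side
        set q := sSup (C ∩ Iic 0) with hqdef
        have hqC : q ∈ C ∩ Iic 0 := (hC.inter isClosed_Iic).csSup_mem hq hbdda
        have hsub : C ⊆ Iic q := by
          intro x hx
          rcases le_total x 0 with h | h
          · exact le_csSup hbdda ⟨hx, h⟩
          · exact absurd ⟨x, hx, h⟩ hp
        exact (aux_upper_one ha (fun n => measure_mono hsub) (hlower q hqC.2)).trans
          (hbound q hqC.1)
      · -- both empty: contradiction
        obtain ⟨x, hx⟩ := hne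
        rcases le_total x 0 with h | h
        · exact absurd ⟨x, hx, h⟩ hq
        · exact absurd ⟨x, hx, h⟩ hp
  · -- lower bound for open sets
    intro O hO
    refine EReal.neg_le.2 (le_iInf₂ fun x hx => ?_)
    suffices claim : ((-(I x) : ℝ) : EReal) ≤
        liminf (fun n => (((a n)⁻¹ : ℝ) : EReal) * ENNReal.log (μ n O)) atTop by
      rw [EReal.coe_neg] at claim
      exact EReal.neg_le.1 claim
    obtain ⟨δ, hδpos, hball⟩ := Metric.isOpen_iff.1 hO x hx
    rw [Real.ball_eq_Ioo] at hball
    rcases lt_trichotomy x 0 with hx0 | hx0 | hx0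
    · -- x < 0
      have ho : ∀ n, μ n (Iic x) - μ n (Iic (x - δ)) ≤ μ n O := by
        intro n
        rw [tsub_le_iff_right]
        calc μ n (Iic x) ≤ μ n (Ioc (x - δ) x ∪ Iic (x - δ)) := measure_mono (fun y (hy : y ∈ Iic x) => by
              rcases le_or_gt y (x - δ) with h | h
              · exact Or.inr h
              · exact Or.inl ⟨h, hy⟩)
          _ ≤ μ n (Ioc (x - δ) x) + μ n (Iic (x - δ)) := measure_union_le _ _
          _ ≤ μ n O + μ n (Iic (x - δ)) := by
              gcongr
              refine fun y (hy : y ∈ Ioc (x - δ) x) => hball ⟨hy.1, ?_⟩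
              exact lt_of_le_of_lt hy.2 (by linarith)
      have hst : I x < I (x - δ) := by
        rw [hI]
        have h2 : x ^ 2 < (x - δ) ^ 2 := by nlinarith
        exact div_lt_div_of_pos_right h2 (by linarith)
      exact aux_lower ha ha' (fun n => hprob n _) ho hst (hlower x hx0.le)
        (hlower (x - δ) (by linarith))
    · -- x = 0
      subst hx0
      have hI0 : I 0 = 0 := by rw [hI]; norm_num
      have hIδ : 0 < I δ := by rw [hI]; positivity
      have hIδ' : 0 < I (-δ) := by
        rw [hI]
        show 0 < (-δ) ^ 2 / (2 * σ2)
        rw [neg_sq]; positivity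
      have h1 := tail_small ha ha' hIδ (hupper δ hδpos.le)
      have h2 := tail_small ha ha' hIδ' (hlower (-δ) (by linarith))
      have hball' : Ioo (-δ) δ ⊆ O := by simpa using hball
      have key : ∀ᶠ n in atTop, (((a n)⁻¹ * (-Real.log 2) : ℝ) : EReal)
          ≤ (((a n)⁻¹ : ℝ) : EReal) * ENNReal.log (μ n O) := by
        filter_upwards [h1, h2] with n k1 k2
        have hcover : (univ : Set ℝ) ⊆ Iic (-δ) ∪ (Ioo (-δ) δ ∪ Ici δ) := fun y _ => by
          rcases le_or_gt y (-δ) with h | h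
          · exact Or.inl h
          · rcases lt_or_ge y δ with h' | h'
            · exact Or.inr (Or.inl ⟨h, h'⟩)
            · exact Or.inr (Or.inr h')
        have hone : (1 : ℝ≥0∞) ≤ 1/4 + (μ n O + 1/4) := by
          calc (1 : ℝ≥0∞) = μ n univ := (measure_univ).symm
            _ ≤ μ n (Iic (-δ)) + (μ n (Ioo (-δ) δ) + μ n (Ici δ)) :=
                (measure_mono hcover).trans ((measure_union_le _ _).trans
                  (by gcongr; exact measure_union_le _ _))
            _ ≤ 1/4 + (μ n O + 1/4) :=
                add_le_add k2 (add_le_add (measure_mono hball') k1)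
        have hhalf : (2⁻¹ : ℝ≥0∞) ≤ μ n O := by
          have h2' : (2⁻¹ : ℝ≥0∞) + 2⁻¹ ≤ 2⁻¹ + μ n O := by
            calc (2⁻¹ : ℝ≥0∞) + 2⁻¹ = 1 := ENNReal.inv_two_add_inv_two
              _ ≤ 1/4 + (μ n O + 1/4) := hone
              _ = 2⁻¹ + μ n O := by
                  rw [add_comm (μ n O), ← add_assoc, ennreal_quarter]
          exact (ENNReal.add_le_add_iff_left (by norm_num)).1 h2'
        calc (((a n)⁻¹ * (-Real.log 2) : ℝ) : EReal)
            = (((a n)⁻¹ : ℝ) : EReal) * ((-Real.log 2 : ℝ) : EReal) := EReal.coe_mul _ _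
          _ = (((a n)⁻¹ : ℝ) : EReal) * ENNReal.log (2⁻¹ : ℝ≥0∞) := by rw [ennlog_half]
          _ ≤ (((a n)⁻¹ : ℝ) : EReal) * ENNReal.log (μ n O) :=
              mul_le_mul_of_nonneg_left (ENNReal.log_monotone hhalf)
                (by exact_mod_cast (inv_pos.2 (ha n)).le)
      calc ((-(I 0) : ℝ) : EReal) = (((0:ℝ)) : EReal) := by rw [hI0]; norm_num
        _ = liminf (fun n => (((a n)⁻¹ * (-Real.log 2) : ℝ) : EReal)) atTop :=
            (tendsto_inv_mul_zero ha' (-Real.log 2)).liminf_eq.symm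
        _ ≤ liminf (fun n => (((a n)⁻¹ : ℝ) : EReal) * ENNReal.log (μ n O)) atTop :=
            liminf_le_liminf key
    · -- x > 0
      have ho : ∀ n, μ n (Ici x) - μ n (Ici (x + δ)) ≤ μ n O := by
        intro n
        rw [tsub_le_iff_right]
        calc μ n (Ici x) ≤ μ n (Ico x (x + δ) ∪ Ici (x + δ)) := measure_mono (fun y (hy : y ∈ Ici x) => by
              rcases lt_or_ge y (x + δ) with h | h
              · exact Or.inl ⟨hy, h⟩
              · exact Or.inr h)
          _ ≤ μ n (Ico x (x + δ)) + μ n (Ici (x + δ)) := measure_union_le _ _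
          _ ≤ μ n O + μ n (Ici (x + δ)) := by
              gcongr
              refine fun y (hy : y ∈ Ico x (x + δ)) => hball ⟨?_, hy.2⟩
              exact lt_of_lt_of_le (by linarith) hy.1
      have hst : I x < I (x + δ) := by
        rw [hI]
        have h2 : x ^ 2 < (x + δ) ^ 2 := by nlinarith
        exact div_lt_div_of_pos_right h2 (by linarith)
      exact aux_lower ha ha' (fun n => hprob n _) ho hst (hupper x hx0.le)
        (hupper (x + δ) (by linarith))
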